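/- Let L be a finite-dimensional Lie algebra over ℂ with Killing radical K, equipped with a ℤ-grading (L_i)_{i∈ℤ}, and let W be a ℂ-subspace of L_0 such that L_0 is the internal direct sum W ⊕ (K ∩ L_0). Then the restriction of the Killing form to W is non-degenerate: if x ∈ W satisfies κ(x,y) = 0 for all y ∈ W, then x = 0. -/
import Mathlib

/-- The Killing radical of a Lie algebra over ℂ: the kernel of the Killing form,
`K = {x ∈ L | κ(x,y) = 0 for all y ∈ L}`. -/
def killingRad (L : Type*) [LieRing L] [LieAlgebra ℂ L] : Submodule ℂ L where
  carrier := {x : L | ∀ y : L, killingForm ℂ L x y = 0}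
  add_mem' := by
    intro a b ha hb y
    rw [map_add, LinearMap.add_apply, ha y, hb y, add_zero]
  zero_mem' := by
    intro y
    rw [map_zero, LinearMap.zero_apply]
  smul_mem' := by
    intro c a ha y
    rw [map_smul, LinearMap.smul_apply, ha y, smul_zero]

/-- If `L_0 = W ⊕ (K ∩ L_0)` (internal direct sum) in a ℤ-graded finite-dimensional
complex Lie algebra, then the Killing form restricted to `W` is non-degenerate. -/
theorem statement9 (L : Type*) [LieRing L] [LieAlgebra ℂ L] [FiniteDimensional ℂ L]
    (Lg : ℤ → Submodule ℂ L)
    (hfin : {i : ℤ | Lg i ≠ ⊥}.Finite)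
    (hdecomp : DirectSum.IsInternal Lg)
    (hbracket : ∀ i j : ℤ, ∀ x ∈ Lg i, ∀ y ∈ Lg j, ⁅x, y⁆ ∈ Lg (i + j))
    (W : Submodule ℂ L) (hW : W ≤ Lg 0)
    (hsum : W ⊔ (killingRad L ⊓ Lg 0) = Lg 0)
    (hdisj : Disjoint W (killingRad L ⊓ Lg 0)) :
    ∀ x ∈ W, (∀ y ∈ W, killingForm ℂ L x y = 0) → x = 0 := by
  intro x hx hxy
  -- First show x ∈ killingRad L
  have hxK : x ∈ killingRad L := by
    intro y
    -- the set of y with κ x y = 0 is the kernel of a linear map; show each Lg i is in it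
    have hmem : ∀ i : ℤ, Lg i ≤ LinearMap.ker (killingForm ℂ L x) := by
      intro i y hy
      rw [LinearMap.mem_ker]
      rcases eq_or_ne i 0 with rfl | hi
      · -- y ∈ Lg 0 = W ⊔ (K ⊓ Lg 0)
        rw [← hsum] at hy
        obtain ⟨w, hw, k, hk, rfl⟩ := Submodule.mem_sup.mp hy
        rw [map_add, hxy w hw]
        have : killingForm ℂ L x k = killingForm ℂ L k x := LieModule.traceForm_comm ℂ L L x k
        rw [this, hk.1 x, add_zero]
      · -- κ x y = trace (ad x ∘ ad y) = 0 since it maps Lg j to Lg (i + j)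
        have hf : ∀ j : ℤ, Set.MapsTo ((LieAlgebra.ad ℂ L x) ∘ₗ (LieAlgebra.ad ℂ L y))
            (Lg j) (Lg (i + j)) := by
          intro j z hz
          have h1 : ⁅y, z⁆ ∈ Lg (i + j) := hbracket i j y hy z hz
          have h2 : ⁅x, ⁅y, z⁆⁆ ∈ Lg (0 + (i + j)) := hbracket 0 (i + j) x (hW hx) _ h1
          simpa using h2
        exact LinearMap.trace_eq_zero_of_mapsTo_ne hdecomp (fun j => i + j)
          (fun j => by simpa using hi) hf
    have htop : (⊤ : Submodule ℂ L) ≤ LinearMap.ker (killingForm ℂ L x) := by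
      rw [← hdecomp.submodule_iSup_eq_top]
      exact iSup_le hmem
    exact htop (Submodule.mem_top)
  have : x ∈ W ⊓ (killingRad L ⊓ Lg 0) := ⟨hx, hxK, hW hx⟩
  rw [hdisj.eq_bot] at this
  exact this
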